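/- Let n, N ≥ 1, let 0 < ε < 1, and let K_1, …, K_N ∈ M_n(ℂ) satisfy ∑_{j=1}^N K_j^* K_j = I_n and ∑_{j=1}^N K_j K_j^* = I_n. Suppose the map Φ(X) = ∑_{j=1}^N K_j X K_j^* has an ε-spectral gap. If P ∈ M_n(ℂ) is a projection such that P K_j^* K_i (I_n − P) = 0 for all 1 ≤ i, j ≤ N, then P = 0 or P = I_n. (In other words, the quantum graph S = span{K_j^* K_i} admits no nontrivial disconnecting projection; by the characterization of connectivity of quantum graphs, the quantum graph associated to Φ is connected.) -/

import Mathlib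

open Matrix Finset

/-- The Hilbert–Schmidt norm `‖A‖_HS = (tr(AᴴA))^{1/2}` of a complex matrix. -/
noncomputable def hsNorm {n : ℕ} (A : Matrix (Fin n) (Fin n) ℂ) : ℝ :=
  Real.sqrt (Aᴴ * A).trace.re

/-- `Φ` has an `ε`-spectral gap:
`‖Φ(X) − (tr X / n)·I‖_HS ≤ (1−ε)‖X − (tr X / n)·I‖_HS` for all `X`. -/
def HasSpectralGap {n : ℕ} (Φ : Matrix (Fin n) (Fin n) ℂ → Matrix (Fin n) (Fin n) ℂ)
    (ε : ℝ) : Prop :=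
  ∀ X : Matrix (Fin n) (Fin n) ℂ,
    hsNorm (Φ X - (X.trace / (n : ℂ)) • 1) ≤ (1 - ε) * hsNorm (X - (X.trace / (n : ℂ)) • 1)

lemma re_trace_sq {n : ℕ} (A : Matrix (Fin n) (Fin n) ℂ) :
    ((Aᴴ * A).trace).re = ∑ i, ∑ j, Complex.normSq (A j i) := by
  simp only [Matrix.trace, Matrix.diag, Matrix.mul_apply, Matrix.conjTranspose_apply]
  rw [Complex.re_sum]
  congr 1; ext i
  rw [Complex.re_sum]
  congr 1; ext j
  rw [show star (A j i) = (starRingEnd ℂ) (A j i) from rfl, ← Complex.normSq_eq_conj_mul_self]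
  simp

lemma proj_trace_re_nonneg {n : ℕ} (R : Matrix (Fin n) (Fin n) ℂ)
    (hR : Rᴴ = R) (hR2 : R * R = R) : 0 ≤ R.trace.re := by
  have : R = Rᴴ * R := by rw [hR, hR2]
  rw [show R.trace = (Rᴴ * R).trace by rw [← this]]
  rw [re_trace_sq]
  exact Finset.sum_nonneg fun i _ => Finset.sum_nonneg fun j _ => Complex.normSq_nonneg _

lemma proj_trace_re_zero {n : ℕ} (R : Matrix (Fin n) (Fin n) ℂ)
    (hR : Rᴴ = R) (hR2 : R * R = R) (h0 : R.trace.re = 0) : R = 0 := by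
  have h1 : R = Rᴴ * R := by rw [hR, hR2]
  have h2 : ((Rᴴ * R).trace).re = 0 := by rw [← h1]; exact h0
  rw [re_trace_sq] at h2
  ext i j
  have := (Finset.sum_eq_zero_iff_of_nonneg (fun i _ => Finset.sum_nonneg
    (fun j _ => Complex.normSq_nonneg _))).mp h2 j (Finset.mem_univ j)
  have := (Finset.sum_eq_zero_iff_of_nonneg (fun k _ =>
    Complex.normSq_nonneg _)).mp this i (Finset.mem_univ i)
  simpa using Complex.normSq_eq_zero.mp this

lemma trace_real {n : ℕ} (R : Matrix (Fin n) (Fin n) ℂ) (hR : Rᴴ = R) :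
    R.trace = (R.trace.re : ℂ) := by
  have : star R.trace = R.trace := by rw [← Matrix.trace_conjTranspose, hR]
  exact (Complex.conj_eq_iff_re.mp this).symm

lemma hsNorm_proj {n : ℕ} (hn : 1 ≤ n) (R : Matrix (Fin n) (Fin n) ℂ)
    (hR : Rᴴ = R) (hR2 : R * R = R) :
    hsNorm (R - (R.trace / (n : ℂ)) • 1) =
      Real.sqrt (R.trace.re - R.trace.re ^ 2 / n) := by
  have hnc : (n : ℂ) ≠ 0 := Nat.cast_ne_zero.mpr (by omega)
  set c : ℂ := R.trace / (n : ℂ) with hc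
  have hcs : star c = c := by
    rw [hc, star_div₀, ← Matrix.trace_conjTranspose, hR]; simp
  set X := R - c • 1 with hX
  have hXh : Xᴴ = X := by
    rw [hX, Matrix.conjTranspose_sub, hR, Matrix.conjTranspose_smul,
      Matrix.conjTranspose_one, hcs]
  have htr : (Xᴴ * X).trace = R.trace - R.trace ^ 2 / n := by
    rw [hXh, hX]
    have : (R - c • 1) * (R - c • 1) = R - (2 * c) • R + (c * c) • 1 := by
      simp only [Matrix.sub_mul, Matrix.mul_sub, hR2, Matrix.smul_mul, Matrix.mul_smul,
        Matrix.one_mul, Matrix.mul_one, smul_smul]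
      module
    rw [this]
    simp only [Matrix.trace_add, Matrix.trace_sub, Matrix.trace_smul, Matrix.trace_one, Fintype.card_fin]
    rw [hc]
    field_simp
    linear_combination (R.trace ^ 2 * ((n : ℂ) * (n : ℂ)⁻¹ - 1)) * mul_inv_cancel₀ hnc
  unfold hsNorm
  congr 1
  rw [htr, trace_real R hR]
  have : ((R.trace.re : ℂ) - (R.trace.re : ℂ) ^ 2 / n) =
      ((R.trace.re - R.trace.re ^ 2 / n : ℝ) : ℂ) := by push_cast; ring
  rw [this, Complex.ofReal_re]
  simp

/-- A CPTP unital map with an `ε`-spectral gap has a connected quantum graph: there is no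
nontrivial projection `P` with `P Kⱼᴴ Kᵢ (I − P) = 0` for all `i, j`. -/
theorem quantum_expander_connected {n N : ℕ} (hn : 1 ≤ n) (hN : 1 ≤ N)
    (ε : ℝ) (hε0 : 0 < ε) (hε1 : ε < 1)
    (K : Fin N → Matrix (Fin n) (Fin n) ℂ)
    (hKtp : ∑ j, (K j)ᴴ * K j = 1) (hKunital : ∑ j, K j * (K j)ᴴ = 1)
    (hgap : HasSpectralGap (fun X => ∑ j, K j * X * (K j)ᴴ) ε)
    (P : Matrix (Fin n) (Fin n) ℂ) (hP : Pᴴ = P) (hP2 : P * P = P)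
    (h : ∀ i j, P * (K j)ᴴ * K i * (1 - P) = 0) :
    P = 0 ∨ P = 1 := by
  set Q : Matrix (Fin n) (Fin n) ℂ := 1 - P with hQdef
  have hQ : Qᴴ = Q := by
    rw [hQdef, Matrix.conjTranspose_sub, Matrix.conjTranspose_one, hP]
  have hQ2 : Q * Q = Q := by
    rw [hQdef]
    simp [Matrix.sub_mul, Matrix.mul_sub, hP2]
  set ΦP : Matrix (Fin n) (Fin n) ℂ := ∑ j, K j * P * (K j)ᴴ with hΦP
  set ΦQ : Matrix (Fin n) (Fin n) ℂ := ∑ j, K j * Q * (K j)ᴴ with hΦQ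
  -- Φ(P) + Φ(Q) = 1
  have hsum : ΦP + ΦQ = 1 := by
    rw [hΦP, hΦQ, ← Finset.sum_add_distrib]
    calc (∑ j, (K j * P * (K j)ᴴ + K j * Q * (K j)ᴴ))
        = ∑ j, K j * (K j)ᴴ := by
          refine Finset.sum_congr rfl fun j _ => ?_
          rw [hQdef]
          simp [Matrix.mul_sub, Matrix.sub_mul, Matrix.mul_assoc]
      _ = 1 := hKunital
  -- Φ(P) * Φ(Q) = 0
  have hmul : ΦP * ΦQ = 0 := by
    rw [hΦP, hΦQ, Finset.sum_mul_sum]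
    refine Finset.sum_eq_zero fun j _ => Finset.sum_eq_zero fun i _ => ?_
    have h' : P * (K j)ᴴ * K i * Q = 0 := by rw [hQdef]; exact h i j
    calc K j * P * (K j)ᴴ * (K i * Q * (K i)ᴴ)
        = K j * (P * (K j)ᴴ * K i * Q) * (K i)ᴴ := by
          simp only [Matrix.mul_assoc]
      _ = 0 := by rw [h']; simp
  -- Φ(P) is a hermitian projection
  have hΦPh : ΦPᴴ = ΦP := by
    rw [hΦP, Matrix.conjTranspose_sum]
    refine Finset.sum_congr rfl fun j _ => ?_
    simp [Matrix.conjTranspose_mul, hP, Matrix.mul_assoc]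
  have hΦP2 : ΦP * ΦP = ΦP := by
    have : ΦQ = 1 - ΦP := by rw [← hsum]; abel
    rw [show ΦP * ΦP = ΦP * (ΦP + ΦQ) - ΦP * ΦQ by rw [Matrix.mul_add]; abel,
      hsum, hmul, Matrix.mul_one, sub_zero]
  -- trace ΦP = trace P
  have htr : ΦP.trace = P.trace := by
    rw [hΦP, Matrix.trace_sum]
    calc (∑ j, (K j * P * (K j)ᴴ).trace)
        = ∑ j, ((K j)ᴴ * K j * P).trace := by
          refine Finset.sum_congr rfl fun j _ => ?_
          rw [Matrix.trace_mul_comm, Matrix.mul_assoc]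
      _ = ((∑ j, (K j)ᴴ * K j) * P).trace := by
          rw [Finset.sum_mul, Matrix.trace_sum]
      _ = P.trace := by rw [hKtp, Matrix.one_mul]
  -- apply the spectral gap to X = P
  have hgp := hgap P
  simp only at hgp
  rw [show ∑ j, K j * P * (K j)ᴴ = ΦP from rfl] at hgp
  rw [show P.trace = ΦP.trace from htr.symm] at hgp
  rw [hsNorm_proj hn ΦP hΦPh hΦP2] at hgp
  rw [show ΦP.trace = P.trace from htr] at hgp
  rw [hsNorm_proj hn P hP hP2] at hgp
  set r := P.trace.re with hr
  set s := r - r ^ 2 / n with hs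
  have hsqrt : Real.sqrt s = 0 := by
    nlinarith [Real.sqrt_nonneg s, hgp]
  have hs0 : s ≤ 0 := by
    by_contra hcon
    push_neg at hcon
    exact absurd hsqrt (ne_of_gt (Real.sqrt_pos.mpr hcon))
  have hr0 : 0 ≤ r := proj_trace_re_nonneg P hP hP2
  have hrn : r ≤ n := by
    have hq0 : 0 ≤ Q.trace.re := proj_trace_re_nonneg Q hQ hQ2
    have : Q.trace = (n : ℂ) - P.trace := by
      rw [hQdef, Matrix.trace_sub, Matrix.trace_one]
      simp
    rw [this] at hq0
    simp only [Complex.sub_re, Complex.natCast_re] at hq0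
    linarith
  have hnr : (0:ℝ) < n := by exact_mod_cast Nat.lt_of_lt_of_le Nat.zero_lt_one hn
  -- r(n - r) ≤ 0 with 0 ≤ r ≤ n forces r = 0 or r = n
  have : r = 0 ∨ r = (n : ℝ) := by
    rcases eq_or_lt_of_le hr0 with h0 | h0
    · exact Or.inl h0.symm
    rcases eq_or_lt_of_le hrn with h1 | h1
    · exact Or.inr h1
    exfalso
    have : 0 < s := by
      rw [hs]
      have : r ^ 2 / n < r := by
        rw [div_lt_iff₀ hnr]
        nlinarith
      linarith
    linarith
  rcases this with h0 | h1
  · exact Or.inl (proj_trace_re_zero P hP hP2 h0)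
  · right
    have : Q.trace.re = 0 := by
      have : Q.trace = (n : ℂ) - P.trace := by
        rw [hQdef, Matrix.trace_sub, Matrix.trace_one]; simp
      rw [this]
      simp only [Complex.sub_re, Complex.natCast_re, ← hr, h1]
      ring
    have := proj_trace_re_zero Q hQ hQ2 this
    rw [hQdef] at this
    linear_combination (norm := abel) -this
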